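/- Let A be a completely positive 5×5 matrix that is invertible, has all entries strictly positive, and satisfies trace(Aᵀ H) = 0, where H is the Horn matrix. Then there exist strictly positive real numbers y₁, y₂, y₃, y₄, y₅ and z₁, z₂, z₃, z₄, z₅ such that A = BBᵀ, where B = B(y) · diag(z₁,…,z₅) and B(y) is the 5×5 matrix with rows (1, 0, 0, y₄, y₅+1), (y₁+1, 1, 0, 0, y₅), (y₁, y₂+1, 1, 0, 0), (0, y₂, y₃+1, 1, 0), (0, 0, y₃, y₄+1, 1). -/

import Mathlib

open Matrix

/-- The Horn matrix. -/
def Horn : Matrix (Fin 5) (Fin 5) ℝ :=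
  !![1, -1,  1,  1, -1;
    -1,  1, -1,  1,  1;
     1, -1,  1, -1,  1;
     1,  1, -1,  1, -1;
    -1,  1,  1, -1,  1]

/-- The matrix `B(y)` from the parametrization of the Horn locus
(with `y₁ = y 0, …, y₅ = y 4`). -/
def Bmat (y : Fin 5 → ℝ) : Matrix (Fin 5) (Fin 5) ℝ :=
  !![1, 0, 0, y 3, y 4 + 1;
     y 0 + 1, 1, 0, 0, y 4;
     y 0, y 1 + 1, 1, 0, 0;
     0, y 1, y 2 + 1, 1, 0;
     0, 0, y 2, y 3 + 1, 1]

set_option maxHeartbeats 1000000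

set_option linter.unusedTactic false
set_option linter.unreachableTactic false

def u : Fin 5 → Fin 5 → ℝ := fun m l => if l = m ∨ l = m + 1 then 1 else 0

def qp (x : Fin 5 → ℝ) : ℝ :=
  (x 0 + x 1 + x 2 + x 3 + x 4)^2
    - 4*(x 0 * x 1 + x 1 * x 2 + x 2 * x 3 + x 3 * x 4 + x 4 * x 0)

lemma qp_nonneg (x : Fin 5 → ℝ) (hx : ∀ i, 0 ≤ x i) : 0 ≤ qp x := by
  have h0 := hx 0; have h1 := hx 1; have h2 := hx 2; have h3 := hx 3; have h4 := hx 4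
  unfold qp
  rcases le_or_gt (x 3) (x 4) with h | h
  · nlinarith [sq_nonneg (x 0 - x 1 + x 2 + x 3 - x 4), mul_nonneg h1 h3,
      mul_nonneg h2 (sub_nonneg.2 h)]
  rcases le_or_gt (x 4) (x 0) with h' | h'
  · nlinarith [sq_nonneg (x 1 - x 2 + x 3 + x 4 - x 0), mul_nonneg h2 h4,
      mul_nonneg h3 (sub_nonneg.2 h')]
  rcases le_or_gt (x 0) (x 1) with h'' | h''
  · nlinarith [sq_nonneg (x 2 - x 3 + x 4 + x 0 - x 1), mul_nonneg h3 h0,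
      mul_nonneg h4 (sub_nonneg.2 h'')]
  rcases le_or_gt (x 1) (x 2) with h3' | h3'
  · nlinarith [sq_nonneg (x 3 - x 4 + x 0 + x 1 - x 2), mul_nonneg h4 h1,
      mul_nonneg h0 (sub_nonneg.2 h3')]
  rcases le_or_gt (x 2) (x 3) with h4' | h4'
  · nlinarith [sq_nonneg (x 4 - x 0 + x 1 + x 2 - x 3), mul_nonneg h0 h2,
      mul_nonneg h1 (sub_nonneg.2 h4')]
  linarith

def rhsF (P Q R : Fin 5 → ℝ) (l i : Fin 5) : ℝ :=
  ∑ m : Fin 5, (P m * (u m l * u m i)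
    + Q m * (u m l * u (m+1) i + u (m+1) l * u m i)
    + R m * (u (m+1) l * u (m+1) i))

lemma rhsF_update (P Q R : Fin 5 → ℝ) (t : Fin 5) (α β : ℝ) (l i : Fin 5) :
    rhsF (Function.update P t (P t + α^2)) (Function.update Q t (Q t + α*β))
      (Function.update R t (R t + β^2)) l i
    = rhsF P Q R l i + (α * u t l + β * u (t+1) l) * (α * u t i + β * u (t+1) i) := by
  unfold rhsF
  rw [Finset.sum_eq_add_sum_sdiff_singleton_of_mem (Finset.mem_univ t),
      Finset.sum_eq_add_sum_sdiff_singleton_of_mem (Finset.mem_univ t)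
      (fun m => (P m * (u m l * u m i)
        + Q m * (u m l * u (m+1) i + u (m+1) l * u m i)
        + R m * (u (m+1) l * u (m+1) i)))]
  have hrest : ∀ m ∈ Finset.univ \ {t},
      (Function.update P t (P t + α^2) m * (u m l * u m i)
        + Function.update Q t (Q t + α*β) m * (u m l * u (m+1) i + u (m+1) l * u m i)
        + Function.update R t (R t + β^2) m * (u (m+1) l * u (m+1) i))
      = (P m * (u m l * u m i)
        + Q m * (u m l * u (m+1) i + u (m+1) l * u m i)
        + R m * (u (m+1) l * u (m+1) i)) := by
    intro m hm
    have hmt : m ≠ t := by simpa using hm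
    rw [Function.update_of_ne hmt, Function.update_of_ne hmt, Function.update_of_ne hmt]
  rw [Finset.sum_congr rfl hrest]
  simp only [Function.update_self]
  ring

lemma rep_step (P Q R : Fin 5 → ℝ) (hP : ∀ m, 0 ≤ P m) (hQ : ∀ m, 0 ≤ Q m) (hR : ∀ m, 0 ≤ R m)
    (hQR : ∀ m, (Q m)^2 ≤ P m * R m) (t : Fin 5) (α β : ℝ) (hα : 0 ≤ α) (hβ : 0 ≤ β) :
    ∃ P' Q' R' : Fin 5 → ℝ, (∀ m, 0 ≤ P' m) ∧ (∀ m, 0 ≤ Q' m) ∧ (∀ m, 0 ≤ R' m) ∧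
      (∀ m, (Q' m)^2 ≤ P' m * R' m) ∧
      ∀ l i, rhsF P' Q' R' l i = rhsF P Q R l i
        + (α * u t l + β * u (t+1) l) * (α * u t i + β * u (t+1) i) := by
  refine ⟨Function.update P t (P t + α^2), Function.update Q t (Q t + α*β),
    Function.update R t (R t + β^2), ?_, ?_, ?_, ?_, fun l i => rhsF_update P Q R t α β l i⟩
  · intro m; by_cases h : m = t
    · subst h; rw [Function.update_self]; exact add_nonneg (hP m) (sq_nonneg α)
    · rw [Function.update_of_ne h]; exact hP m
  · intro m; by_cases h : m = t
    · subst h; rw [Function.update_self]; exact add_nonneg (hQ m) (mul_nonneg hα hβ)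
    · rw [Function.update_of_ne h]; exact hQ m
  · intro m; by_cases h : m = t
    · subst h; rw [Function.update_self]; exact add_nonneg (hR m) (sq_nonneg β)
    · rw [Function.update_of_ne h]; exact hR m
  · intro m; by_cases h : m = t
    · subst h; simp only [Function.update_self]
      nlinarith [hQR m, hQ m, mul_nonneg hα hβ, sq_nonneg (α*β), hP m, hR m,
        sq_nonneg (P m * β^2 - R m * α^2), mul_nonneg (mul_nonneg (hQ m) hα) hβ,
        sq_nonneg (α * β * Q m), mul_nonneg (hP m) (sq_nonneg β), mul_nonneg (hR m) (sq_nonneg α)]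
    · rw [Function.update_of_ne h, Function.update_of_ne h, Function.update_of_ne h]; exact hQR m

lemma zero_char' (x : Fin 5 → ℝ) (hx : ∀ i, 0 ≤ x i) (hq : qp x = 0) :
    (∀ l, x l = x 0 * u 0 l + x 2 * u 1 l) ∨ (∀ l, x l = x 1 * u 1 l + x 3 * u 2 l) ∨ (∀ l, x l = x 2 * u 2 l + x 4 * u 3 l) ∨ (∀ l, x l = x 3 * u 3 l + x 0 * u 4 l) ∨ (∀ l, x l = x 4 * u 4 l + x 1 * u 0 l) := by
  have h0 := hx 0; have h1 := hx 1; have h2 := hx 2; have h3 := hx 3; have h4 := hx 4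
  unfold qp at hq
  rcases le_or_gt (x 3) (x 4) with h | h
  · have hsq : (x 0 - x 1 + x 2 + x 3 - x 4)^2 = 0 := by
      nlinarith [sq_nonneg (x 0 - x 1 + x 2 + x 3 - x 4), mul_nonneg h1 h3, mul_nonneg h2 (sub_nonneg.2 h)]
    have t3 : (x 0 - x 1 + x 2 + x 3 - x 4) = 0 := by
      exact pow_eq_zero_iff two_ne_zero |>.mp hsq
    have t1 : x 1 * x 3 = 0 := by nlinarith [hsq, mul_nonneg h1 h3, mul_nonneg h2 (sub_nonneg.2 h)]
    have t2 : x 2 * (x 4 - x 3) = 0 := by nlinarith [hsq, mul_nonneg h1 h3, mul_nonneg h2 (sub_nonneg.2 h)]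
    rcases mul_eq_zero.mp t1 with z1 | z1
    · rcases mul_eq_zero.mp t2 with z2 | z2
      · refine Or.inr (Or.inr (Or.inr (Or.inl (fun l => ?_))))
        fin_cases l <;> simp [u] <;> linarith
      · have z3 : x 0 = 0 := by linarith
        have z4 : x 2 = 0 := by linarith
        refine Or.inr (Or.inr (Or.inr (Or.inl (fun l => ?_))))
        fin_cases l <;> simp [u] <;> linarith
    · rcases mul_eq_zero.mp t2 with z2 | z2
      · refine Or.inr (Or.inr (Or.inr (Or.inr (fun l => ?_))))
        fin_cases l <;> simp [u] <;> linarith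
      · have z3 : x 4 = 0 := by linarith
        refine Or.inl (fun l => ?_)
        fin_cases l <;> simp [u] <;> linarith
  rcases le_or_gt (x 4) (x 0) with h | h
  · have hsq : (x 1 - x 2 + x 3 + x 4 - x 0)^2 = 0 := by
      nlinarith [sq_nonneg (x 1 - x 2 + x 3 + x 4 - x 0), mul_nonneg h2 h4, mul_nonneg h3 (sub_nonneg.2 h)]
    have t3 : (x 1 - x 2 + x 3 + x 4 - x 0) = 0 := by
      exact pow_eq_zero_iff two_ne_zero |>.mp hsq
    have t1 : x 2 * x 4 = 0 := by nlinarith [hsq, mul_nonneg h2 h4, mul_nonneg h3 (sub_nonneg.2 h)]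
    have t2 : x 3 * (x 0 - x 4) = 0 := by nlinarith [hsq, mul_nonneg h2 h4, mul_nonneg h3 (sub_nonneg.2 h)]
    rcases mul_eq_zero.mp t1 with z1 | z1
    · rcases mul_eq_zero.mp t2 with z2 | z2
      · refine Or.inr (Or.inr (Or.inr (Or.inr (fun l => ?_))))
        fin_cases l <;> simp [u] <;> linarith
      · have z3 : x 1 = 0 := by linarith
        have z4 : x 3 = 0 := by linarith
        refine Or.inr (Or.inr (Or.inr (Or.inr (fun l => ?_))))
        fin_cases l <;> simp [u] <;> linarith
    · rcases mul_eq_zero.mp t2 with z2 | z2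
      · refine Or.inl (fun l => ?_)
        fin_cases l <;> simp [u] <;> linarith
      · have z3 : x 0 = 0 := by linarith
        refine Or.inr (Or.inl (fun l => ?_))
        fin_cases l <;> simp [u] <;> linarith
  rcases le_or_gt (x 0) (x 1) with h | h
  · have hsq : (x 2 - x 3 + x 4 + x 0 - x 1)^2 = 0 := by
      nlinarith [sq_nonneg (x 2 - x 3 + x 4 + x 0 - x 1), mul_nonneg h3 h0, mul_nonneg h4 (sub_nonneg.2 h)]
    have t3 : (x 2 - x 3 + x 4 + x 0 - x 1) = 0 := by
      exact pow_eq_zero_iff two_ne_zero |>.mp hsq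
    have t1 : x 3 * x 0 = 0 := by nlinarith [hsq, mul_nonneg h3 h0, mul_nonneg h4 (sub_nonneg.2 h)]
    have t2 : x 4 * (x 1 - x 0) = 0 := by nlinarith [hsq, mul_nonneg h3 h0, mul_nonneg h4 (sub_nonneg.2 h)]
    rcases mul_eq_zero.mp t1 with z1 | z1
    · rcases mul_eq_zero.mp t2 with z2 | z2
      · refine Or.inl (fun l => ?_)
        fin_cases l <;> simp [u] <;> linarith
      · have z3 : x 2 = 0 := by linarith
        have z4 : x 4 = 0 := by linarith
        refine Or.inl (fun l => ?_)
        fin_cases l <;> simp [u] <;> linarith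
    · rcases mul_eq_zero.mp t2 with z2 | z2
      · refine Or.inr (Or.inl (fun l => ?_))
        fin_cases l <;> simp [u] <;> linarith
      · have z3 : x 1 = 0 := by linarith
        refine Or.inr (Or.inr (Or.inl (fun l => ?_)))
        fin_cases l <;> simp [u] <;> linarith
  rcases le_or_gt (x 1) (x 2) with h | h
  · have hsq : (x 3 - x 4 + x 0 + x 1 - x 2)^2 = 0 := by
      nlinarith [sq_nonneg (x 3 - x 4 + x 0 + x 1 - x 2), mul_nonneg h4 h1, mul_nonneg h0 (sub_nonneg.2 h)]
    have t3 : (x 3 - x 4 + x 0 + x 1 - x 2) = 0 := by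
      exact pow_eq_zero_iff two_ne_zero |>.mp hsq
    have t1 : x 4 * x 1 = 0 := by nlinarith [hsq, mul_nonneg h4 h1, mul_nonneg h0 (sub_nonneg.2 h)]
    have t2 : x 0 * (x 2 - x 1) = 0 := by nlinarith [hsq, mul_nonneg h4 h1, mul_nonneg h0 (sub_nonneg.2 h)]
    rcases mul_eq_zero.mp t1 with z1 | z1
    · rcases mul_eq_zero.mp t2 with z2 | z2
      · refine Or.inr (Or.inl (fun l => ?_))
        fin_cases l <;> simp [u] <;> linarith
      · have z3 : x 3 = 0 := by linarith
        have z4 : x 0 = 0 := by linarith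
        refine Or.inr (Or.inl (fun l => ?_))
        fin_cases l <;> simp [u] <;> linarith
    · rcases mul_eq_zero.mp t2 with z2 | z2
      · refine Or.inr (Or.inr (Or.inl (fun l => ?_)))
        fin_cases l <;> simp [u] <;> linarith
      · have z3 : x 2 = 0 := by linarith
        refine Or.inr (Or.inr (Or.inr (Or.inl (fun l => ?_))))
        fin_cases l <;> simp [u] <;> linarith
  rcases le_or_gt (x 2) (x 3) with h | h
  · have hsq : (x 4 - x 0 + x 1 + x 2 - x 3)^2 = 0 := by
      nlinarith [sq_nonneg (x 4 - x 0 + x 1 + x 2 - x 3), mul_nonneg h0 h2, mul_nonneg h1 (sub_nonneg.2 h)]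
    have t3 : (x 4 - x 0 + x 1 + x 2 - x 3) = 0 := by
      exact pow_eq_zero_iff two_ne_zero |>.mp hsq
    have t1 : x 0 * x 2 = 0 := by nlinarith [hsq, mul_nonneg h0 h2, mul_nonneg h1 (sub_nonneg.2 h)]
    have t2 : x 1 * (x 3 - x 2) = 0 := by nlinarith [hsq, mul_nonneg h0 h2, mul_nonneg h1 (sub_nonneg.2 h)]
    rcases mul_eq_zero.mp t1 with z1 | z1
    · rcases mul_eq_zero.mp t2 with z2 | z2
      · refine Or.inr (Or.inr (Or.inl (fun l => ?_)))
        fin_cases l <;> simp [u] <;> linarith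
      · have z3 : x 4 = 0 := by linarith
        have z4 : x 1 = 0 := by linarith
        refine Or.inr (Or.inr (Or.inl (fun l => ?_)))
        fin_cases l <;> simp [u] <;> linarith
    · rcases mul_eq_zero.mp t2 with z2 | z2
      · refine Or.inr (Or.inr (Or.inr (Or.inl (fun l => ?_))))
        fin_cases l <;> simp [u] <;> linarith
      · have z3 : x 3 = 0 := by linarith
        refine Or.inr (Or.inr (Or.inr (Or.inr (fun l => ?_))))
        fin_cases l <;> simp [u] <;> linarith
  linarith


lemma rep (k : ℕ) (B : Matrix (Fin 5) (Fin k) ℝ) (hB : ∀ i j, 0 ≤ B i j)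
    (hq : ∀ j, qp (fun l => B l j) = 0) :
    ∃ P Q R : Fin 5 → ℝ, (∀ m, 0 ≤ P m) ∧ (∀ m, 0 ≤ Q m) ∧ (∀ m, 0 ≤ R m) ∧
      (∀ m, (Q m)^2 ≤ P m * R m) ∧
      ∀ l i, (∑ j, B l j * B i j) = rhsF P Q R l i := by
  induction k with
  | zero =>
    exact ⟨0, 0, 0, fun m => le_refl 0, fun m => le_refl 0, fun m => le_refl 0,
      fun m => by simp, fun l i => by simp [rhsF]⟩
  | succ n ih =>
    obtain ⟨P, Q, R, hP, hQ, hR, hQR, hrep⟩ :=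
      ih (fun l j => B l j.succ) (fun i j => hB i j.succ) (fun j => hq j.succ)
    have hc := zero_char' (fun l => B l 0) (fun i => hB i 0) (hq 0)
    have key : ∀ t : Fin 5, ∀ α β : ℝ, 0 ≤ α → 0 ≤ β →
        (∀ l, B l 0 = α * u t l + β * u (t+1) l) →
        ∃ P' Q' R' : Fin 5 → ℝ, (∀ m, 0 ≤ P' m) ∧ (∀ m, 0 ≤ Q' m) ∧ (∀ m, 0 ≤ R' m) ∧
          (∀ m, (Q' m)^2 ≤ P' m * R' m) ∧
          ∀ l i, (∑ j, B l j * B i j) = rhsF P' Q' R' l i := by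
      intro t α β hα hβ hd
      obtain ⟨P', Q', R', hP', hQ', hR', hQR', hstep⟩ :=
        rep_step P Q R hP hQ hR hQR t α β hα hβ
      refine ⟨P', Q', R', hP', hQ', hR', hQR', fun l i => ?_⟩
      rw [Fin.sum_univ_succ, hstep l i]
      have h2 := hrep l i
      rw [h2, hd l, hd i]; ring
    rcases hc with h | h | h | h | h
    · exact key 0 (B 0 0) (B 2 0) (hB 0 0) (hB 2 0) h
    · exact key 1 (B 1 0) (B 3 0) (hB 1 0) (hB 3 0) h
    · exact key 2 (B 2 0) (B 4 0) (hB 2 0) (hB 4 0) h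
    · exact key 3 (B 3 0) (B 0 0) (hB 3 0) (hB 0 0) h
    · exact key 4 (B 4 0) (B 1 0) (hB 4 0) (hB 1 0) h

lemma chain (p0 p1 p2 p3 p4 r0 r1 r2 r3 r4 q0 q1 q2 q3 q4 : ℝ)
    (hp0 : 0 < p0) (hp1 : 0 < p1) (hp2 : 0 < p2) (hp3 : 0 < p3) (hp4 : 0 < p4)
    (hr0 : 0 < r0) (hr1 : 0 < r1) (hr2 : 0 < r2) (hr3 : 0 < r3) (hr4 : 0 < r4)
    (c0 : q0^2 ≤ p0*r0) (c1 : q1^2 ≤ p1*r1) (c2 : q2^2 ≤ p2*r2)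
    (c3 : q3^2 ≤ p3*r3) (c4 : q4^2 ≤ p4*r4) :
    ∃ s0 s1 s2 s3 s4 : ℝ, 0 < s0 ∧ 0 < s1 ∧ 0 < s2 ∧ 0 < s3 ∧ 0 < s4 ∧
      s1 + q0^2/s0 = p1 + r0 ∧ s2 + q1^2/s1 = p2 + r1 ∧ s3 + q2^2/s2 = p3 + r2 ∧
      s4 + q3^2/s3 = p4 + r3 ∧ s0 + q4^2/s4 = p0 + r4 := by
  have step : ∀ pc rc c q : ℝ, 0 < pc → 0 < rc → q^2 ≤ pc*rc →
      ∀ t : ℝ, pc ≤ t → c ≤ c + rc - q^2/t := by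
    intro pc rc c q hpc hrc hcs t ht
    have h1 : q^2/t ≤ rc := by
      rw [div_le_iff₀ (by linarith)]
      nlinarith [mul_le_mul_of_nonneg_left ht hrc.le]
    linarith
  have contf : ∀ c q a : ℝ, 0 < a → ContinuousOn (fun t : ℝ => c - q^2/t) (Set.Ici a) := by
    intro c q a ha
    apply ContinuousOn.sub continuousOn_const
    exact ContinuousOn.div continuousOn_const continuousOn_id
      (fun x hx => ne_of_gt (lt_of_lt_of_le ha hx))
  set f0 : ℝ → ℝ := fun t => (p1 + r0) - q0^2/t with hf0
  set f1 : ℝ → ℝ := fun t => (p2 + r1) - q1^2/t with hf1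
  set f2 : ℝ → ℝ := fun t => (p3 + r2) - q2^2/t with hf2
  set f3 : ℝ → ℝ := fun t => (p4 + r3) - q3^2/t with hf3
  set f4 : ℝ → ℝ := fun t => (p0 + r4) - q4^2/t with hf4
  have m0 : Set.MapsTo f0 (Set.Ici p0) (Set.Ici p1) :=
    fun t ht => step p0 r0 p1 q0 hp0 hr0 c0 t ht
  have m1 : Set.MapsTo f1 (Set.Ici p1) (Set.Ici p2) :=
    fun t ht => step p1 r1 p2 q1 hp1 hr1 c1 t ht
  have m2 : Set.MapsTo f2 (Set.Ici p2) (Set.Ici p3) :=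
    fun t ht => step p2 r2 p3 q2 hp2 hr2 c2 t ht
  have m3 : Set.MapsTo f3 (Set.Ici p3) (Set.Ici p4) :=
    fun t ht => step p3 r3 p4 q3 hp3 hr3 c3 t ht
  have m4 : Set.MapsTo f4 (Set.Ici p4) (Set.Ici p0) :=
    fun t ht => step p4 r4 p0 q4 hp4 hr4 c4 t ht
  have cg : ContinuousOn (f4 ∘ f3 ∘ f2 ∘ f1 ∘ f0) (Set.Ici p0) := by
    refine ContinuousOn.comp (contf _ q4 _ hp4) ?_ (((m3.comp m2).comp m1).comp m0)
    refine ContinuousOn.comp (contf _ q3 _ hp3) ?_ ((m2.comp m1).comp m0)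
    refine ContinuousOn.comp (contf _ q2 _ hp2) ?_ (m1.comp m0)
    exact ContinuousOn.comp (contf _ q1 _ hp1) (contf _ q0 _ hp0) m0
  set g : ℝ → ℝ := f4 ∘ f3 ∘ f2 ∘ f1 ∘ f0 with hg
  have hM : p0 ≤ p0 + r4 := by linarith
  have memI : ∀ t : ℝ, p0 ≤ t → p4 ≤ f3 (f2 (f1 (f0 t))) := by
    intro t ht
    exact m3 (m2 (m1 (m0 ht)))
  have hgl : ∀ t : ℝ, p0 ≤ t → p0 ≤ g t := by
    intro t ht
    exact m4 (memI t ht)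
  have hgu : ∀ t : ℝ, p0 ≤ t → g t ≤ p0 + r4 := by
    intro t ht
    have h4 : (0:ℝ) < f3 (f2 (f1 (f0 t))) := lt_of_lt_of_le hp4 (memI t ht)
    have : 0 ≤ q4^2 / f3 (f2 (f1 (f0 t))) := div_nonneg (sq_nonneg q4) h4.le
    show (p0 + r4) - q4^2 / f3 (f2 (f1 (f0 t))) ≤ p0 + r4
    linarith
  have conth : ContinuousOn (fun t => g t - t) (Set.Icc p0 (p0 + r4)) :=
    (cg.mono (Set.Icc_subset_Ici_self)).sub continuousOn_id
  have hsub := intermediate_value_Icc' hM conth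
  have h0mem : (0:ℝ) ∈ Set.Icc ((fun t => g t - t) (p0 + r4)) ((fun t => g t - t) p0) := by
    constructor
    · have := hgu (p0 + r4) hM
      simp only []
      linarith
    · have := hgl p0 le_rfl
      simp only []
      linarith
  obtain ⟨t0, ht0I, ht0⟩ := hsub h0mem
  have hs0 : p0 ≤ t0 := ht0I.1
  have hfix : g t0 = t0 := by
    have : g t0 - t0 = 0 := ht0
    linarith
  refine ⟨t0, f0 t0, f1 (f0 t0), f2 (f1 (f0 t0)), f3 (f2 (f1 (f0 t0))),
    lt_of_lt_of_le hp0 hs0,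
    lt_of_lt_of_le hp1 (m0 hs0),
    lt_of_lt_of_le hp2 (m1 (m0 hs0)),
    lt_of_lt_of_le hp3 (m2 (m1 (m0 hs0))),
    lt_of_lt_of_le hp4 (m3 (m2 (m1 (m0 hs0)))),
    by show f0 t0 + q0^2/t0 = p1 + r0; simp [hf0] <;> ring,
    by show f1 (f0 t0) + q1^2/(f0 t0) = p2 + r1; simp [hf1] <;> ring,
    by show f2 (f1 (f0 t0)) + q2^2/(f1 (f0 t0)) = p3 + r2; simp [hf2] <;> ring,
    by show f3 (f2 (f1 (f0 t0))) + q3^2/(f2 (f1 (f0 t0))) = p4 + r3; simp [hf3] <;> ring,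
    ?_⟩
  have : f4 (f3 (f2 (f1 (f0 t0)))) = t0 := hfix
  rw [hf4] at this
  simp only [] at this
  linarith

lemma trace_eq (k : ℕ) (B : Matrix (Fin 5) (Fin k) ℝ) :
    Matrix.trace ((B * Bᵀ)ᵀ * Horn) = ∑ j, qp (fun l => B l j) := by
  simp only [Matrix.trace, Matrix.diag, Matrix.mul_apply, Matrix.transpose_apply, qp,
    Fin.sum_univ_five]
  norm_num [Horn, Matrix.vecHead, Matrix.vecTail, Matrix.cons_val_zero, Matrix.cons_val_one, Matrix.cons_val_two, Matrix.cons_val_three, Matrix.cons_val_four]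
  simp only [Finset.sum_mul, Finset.mul_sum, ← Finset.sum_add_distrib, ← Finset.sum_sub_distrib,
    ← Finset.sum_neg_distrib]
  apply Finset.sum_congr rfl
  intro j _
  ring

/-- a completely positive, invertible, entrywise positive matrix orthogonal to the
Horn matrix has a cp-factorization of the form `B(y) · diag(z)`. -/
theorem horn_locus_factorization (A : Matrix (Fin 5) (Fin 5) ℝ)
    (hcp : ∃ (k : ℕ) (B : Matrix (Fin 5) (Fin k) ℝ), (∀ i j, 0 ≤ B i j) ∧ A = B * Bᵀ)
    (hinv : IsUnit A) (hpos : ∀ i j, 0 < A i j)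
    (horth : Matrix.trace (Aᵀ * Horn) = 0) :
    ∃ y z : Fin 5 → ℝ, (∀ i, 0 < y i) ∧ (∀ i, 0 < z i) ∧
      A = (Bmat y * diagonal z) * (Bmat y * diagonal z)ᵀ := by
  obtain ⟨k, B, hB, hfact⟩ := hcp
  rw [hfact] at horth
  rw [trace_eq k B] at horth
  have hqz : ∀ j, qp (fun l => B l j) = 0 := by
    have := (Finset.sum_eq_zero_iff_of_nonneg
      (fun j _ => qp_nonneg (fun l => B l j) (fun i => hB i j))).mp horth
    exact fun j => this j (Finset.mem_univ j)
  obtain ⟨P, Q, R, hP, hQ, hR, hQR, hrep⟩ := rep k B hB hqz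
  have hA : ∀ l i, A l i = rhsF P Q R l i := by
    intro l i
    rw [hfact]
    show ∑ j, B l j * Bᵀ j i = _
    simp only [Matrix.transpose_apply]
    exact hrep l i
  -- positivity of Q entries
  have hQ0 : 0 < Q 0 := by
    have h := hA 0 2; have := hpos 0 2
    simp (config := { decide := true }) [rhsF, Fin.sum_univ_five, u] at h
    linarith
  have hQ1 : 0 < Q 1 := by
    have h := hA 1 3; have := hpos 1 3
    simp (config := { decide := true }) [rhsF, Fin.sum_univ_five, u] at h
    linarith
  have hQ2 : 0 < Q 2 := by
    have h := hA 2 4; have := hpos 2 4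
    simp (config := { decide := true }) [rhsF, Fin.sum_univ_five, u] at h
    linarith
  have hQ3 : 0 < Q 3 := by
    have h := hA 3 0; have := hpos 3 0
    simp (config := { decide := true }) [rhsF, Fin.sum_univ_five, u] at h
    linarith
  have hQ4 : 0 < Q 4 := by
    have h := hA 4 1; have := hpos 4 1
    simp (config := { decide := true }) [rhsF, Fin.sum_univ_five, u] at h
    linarith
  have hQpos : ∀ m, 0 < Q m := by
    intro m; fin_cases m <;> assumption
  have hPpos : ∀ m, 0 < P m := by
    intro m
    rcases (hP m).lt_or_eq with h | h
    · exact h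
    · exfalso; nlinarith [hQR m, hQpos m, hR m]
  have hRpos : ∀ m, 0 < R m := by
    intro m
    rcases (hR m).lt_or_eq with h | h
    · exact h
    · exfalso; nlinarith [hQR m, hQpos m, hP m]
  obtain ⟨s0, s1, s2, s3, s4, hs0, hs1, hs2, hs3, hs4, e1, e2, e3, e4, e5⟩ :=
    chain (P 0) (P 1) (P 2) (P 3) (P 4) (R 0) (R 1) (R 2) (R 3) (R 4)
      (Q 0) (Q 1) (Q 2) (Q 3) (Q 4)
      (hPpos 0) (hPpos 1) (hPpos 2) (hPpos 3) (hPpos 4)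
      (hRpos 0) (hRpos 1) (hRpos 2) (hRpos 3) (hRpos 4)
      (hQR 0) (hQR 1) (hQR 2) (hQR 3) (hQR 4)
  set s' : Fin 5 → ℝ := ![s0, s1, s2, s3, s4] with hs'
  have hs'0 : s' 0 = s0 := by simp [hs']
  have hs'1 : s' 1 = s1 := by simp [hs']
  have hs'2 : s' 2 = s2 := by simp [hs']
  have hs'3 : s' 3 = s3 := by simp [hs']
  have hs'4 : s' 4 = s4 := by simp [hs']
  have hs'pos : ∀ m, 0 < s' m := by
    intro m; fin_cases m <;> simp [hs'] <;> assumption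
  set y : Fin 5 → ℝ := fun m => Q m / s' m with hy
  set z : Fin 5 → ℝ := fun m => Real.sqrt (s' m) with hz
  have hypos : ∀ m, 0 < y m := fun m => div_pos (hQpos m) (hs'pos m)
  have hzpos : ∀ m, 0 < z m := fun m => Real.sqrt_pos.2 (hs'pos m)
  -- scalar equations
  have hzz : ∀ m, z m * z m = s' m := by
    intro m
    rw [hz]
    exact Real.mul_self_sqrt (hs'pos m).le
  have E1 : ∀ m, s' m * y m = Q m := by
    intro m
    have hne := (hs'pos m).ne'
    rw [hy]
    simp only []
    rw [mul_comm]
    exact div_mul_cancel₀ (Q m) hne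
  have hdiv : ∀ (q t : ℝ), 0 < t → t * (q / t)^2 = q^2 / t := by
    intro q t ht
    field_simp
  have E2_1 : s' 1 + s' 0 * (y 0)^2 = P 1 + R 0 := by
    rw [hy]; simp only []; rw [hs'0, hs'1, hdiv (Q 0) s0 hs0]; linarith
  have E2_2 : s' 2 + s' 1 * (y 1)^2 = P 2 + R 1 := by
    rw [hy]; simp only []; rw [hs'1, hs'2, hdiv (Q 1) s1 hs1]; linarith
  have E2_3 : s' 3 + s' 2 * (y 2)^2 = P 3 + R 2 := by
    rw [hy]; simp only []; rw [hs'2, hs'3, hdiv (Q 2) s2 hs2]; linarith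
  have E2_4 : s' 4 + s' 3 * (y 3)^2 = P 4 + R 3 := by
    rw [hy]; simp only []; rw [hs'3, hs'4, hdiv (Q 3) s3 hs3]; linarith
  have E2_0 : s' 0 + s' 4 * (y 4)^2 = P 0 + R 4 := by
    rw [hy]; simp only []; rw [hs'4, hs'0, hdiv (Q 4) s4 hs4]; linarith
  have E1_0 := E1 0; have E1_1 := E1 1; have E1_2 := E1 2
  have E1_3 := E1 3; have E1_4 := E1 4
  clear_value s' y z
  have key : ∀ l i : Fin 5, rhsF P Q R l i = ∑ m : Fin 5, s' m * (Bmat y l m * Bmat y i m) := by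
    intro l i
    fin_cases l <;> fin_cases i <;>
      simp (config := { decide := true }) [rhsF, Fin.sum_univ_five, u, Bmat]
    · linear_combination (-1 : ℝ) * E2_0 + (-1 : ℝ) * E2_4 + (-2 : ℝ) * E1_4
    · linear_combination (-1 : ℝ) * E2_0 + (-1 : ℝ) * E1_0 + (-1 : ℝ) * E1_4
    · linear_combination (-1 : ℝ) * E1_0
    · linear_combination (-1 : ℝ) * E1_3
    · linear_combination (-1 : ℝ) * E1_3 + (-1 : ℝ) * E2_4 + (-1 : ℝ) * E1_4
    · linear_combination (-1 : ℝ) * E2_0 + (-1 : ℝ) * E1_0 + (-1 : ℝ) * E1_4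
    · linear_combination (-1 : ℝ) * E2_0 + (-2 : ℝ) * E1_0 + (-1 : ℝ) * E2_1
    · linear_combination (-1 : ℝ) * E1_0 + (-1 : ℝ) * E2_1 + (-1 : ℝ) * E1_1
    · linear_combination (-1 : ℝ) * E1_1
    · linear_combination (-1 : ℝ) * E1_4
    · linear_combination (-1 : ℝ) * E1_0
    · linear_combination (-1 : ℝ) * E1_0 + (-1 : ℝ) * E2_1 + (-1 : ℝ) * E1_1
    · linear_combination (-1 : ℝ) * E2_1 + (-2 : ℝ) * E1_1 + (-1 : ℝ) * E2_2
    · linear_combination (-1 : ℝ) * E1_1 + (-1 : ℝ) * E2_2 + (-1 : ℝ) * E1_2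
    · linear_combination (-1 : ℝ) * E1_2
    · linear_combination (-1 : ℝ) * E1_3
    · linear_combination (-1 : ℝ) * E1_1
    · linear_combination (-1 : ℝ) * E1_1 + (-1 : ℝ) * E2_2 + (-1 : ℝ) * E1_2
    · linear_combination (-1 : ℝ) * E2_2 + (-2 : ℝ) * E1_2 + (-1 : ℝ) * E2_3
    · linear_combination (-1 : ℝ) * E1_2 + (-1 : ℝ) * E2_3 + (-1 : ℝ) * E1_3
    · linear_combination (-1 : ℝ) * E1_3 + (-1 : ℝ) * E2_4 + (-1 : ℝ) * E1_4
    · linear_combination (-1 : ℝ) * E1_4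
    · linear_combination (-1 : ℝ) * E1_2
    · linear_combination (-1 : ℝ) * E1_2 + (-1 : ℝ) * E2_3 + (-1 : ℝ) * E1_3
    · linear_combination (-1 : ℝ) * E2_3 + (-2 : ℝ) * E1_3 + (-1 : ℝ) * E2_4
  have final2 : ∀ l i : Fin 5, ((Bmat y * diagonal z) * (Bmat y * diagonal z)ᵀ) l i
      = ∑ m : Fin 5, s' m * (Bmat y l m * Bmat y i m) := by
    intro l i
    simp only [Matrix.mul_apply, Matrix.transpose_apply, Matrix.diagonal_apply, mul_ite,
      mul_zero, ite_mul, zero_mul, Finset.sum_ite_eq, Finset.sum_ite_eq', Finset.mem_univ,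
      if_true]
    apply Finset.sum_congr rfl
    intro m _
    calc Bmat y l m * z m * (Bmat y i m * z m)
        = (z m * z m) * (Bmat y l m * Bmat y i m) := by ring
      _ = s' m * (Bmat y l m * Bmat y i m) := by rw [hzz m]
  refine ⟨y, z, hypos, hzpos, ?_⟩
  ext l i
  rw [hA l i, key l i, ← final2 l i]
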